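/- Let G be a finite abelian group. Then BO(|G|, G) = |G| + 1 if the 2-rank of G equals 1, and BO(|G|, G) = |G| otherwise. -/

import Mathlib

open Finset

/-- A finset `S` of an abelian group is `k`-barycentric if it has `k` elements
and the sum of its elements equals `k • g` for some `g ∈ S`. -/
def IsBarycentric {G : Type*} [AddCommGroup G] (k : ℕ) (S : Finset G) : Prop :=
  S.card = k ∧ ∃ g ∈ S, ∑ x ∈ S, x = k • g

/-- The `k`-th barycentric Olson constant: the smallest `ℓ` such that every subset
of `G` with at least `ℓ` elements contains a `k`-barycentric subset. -/
noncomputable def BO (k : ℕ) (G : Type*) [AddCommGroup G] [Fintype G] : ℕ :=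
  sInf {ℓ : ℕ | ∀ A : Finset G, ℓ ≤ A.card → ∃ B ⊆ A, IsBarycentric k B}

/-- The 2-rank of a finite abelian group `G`: the number of invariant factors of `G`
divisible by 2, equivalently `log₂` of the number of solutions of `2 • g = 0`. -/
noncomputable def twoRank (G : Type*) [AddCommGroup G] : ℕ :=
  Nat.log 2 (Nat.card {g : G // 2 • g = 0})

section Aux

variable {H : Type*} [AddCommGroup H] [Fintype H]

private lemma addself (h2 : ∀ t : H, 2 • t = 0) (x : H) : x + x = 0 := by
  have := h2 x; rwa [two_nsmul] at this

private lemma pair_sum (h2 : ∀ t : H, 2 • t = 0) {a : H} (ha : a ≠ 0) :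
    ∃ m : ℕ, Fintype.card H = 2 * m ∧ ∑ t : H, t = m • a := by
  classical
  set K := AddSubgroup.zmultiples a with hK
  have hKmem : ∀ x : H, x ∈ K ↔ x = 0 ∨ x = a := by
    intro x
    constructor
    · intro hx
      obtain ⟨n, rfl⟩ := AddSubgroup.mem_zmultiples_iff.mp hx
      rcases Int.even_or_odd n with ⟨m, rfl⟩ | ⟨m, rfl⟩
      · left; rw [add_zsmul]; exact addself h2 _
      · right
        rw [add_zsmul, one_zsmul, mul_zsmul, two_zsmul, addself h2 _, zero_add]
    · rintro (rfl | h)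
      · exact zero_mem K
      · rw [h]; exact AddSubgroup.mem_zmultiples a
  letI : Fintype (H ⧸ K) := Fintype.ofFinite _
  have hfiber : ∀ q : H ⧸ K,
      ∑ t ∈ univ.filter (fun t => (QuotientAddGroup.mk t : H ⧸ K) = q), t = a := by
    intro q
    induction q using QuotientAddGroup.induction_on with
    | H r =>
      have hmem : ∀ t : H, ((t : H ⧸ K) = (r : H ⧸ K)) ↔ (t = r ∨ t = r + a) := by
        intro t
        rw [QuotientAddGroup.eq, hKmem]
        constructor
        · rintro (h | h)
          · left; exact (neg_add_eq_zero.mp h)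
          · right
            have h1 : r = t + a := by rw [← h]; abel
            rw [h1, add_assoc, addself h2 a, add_zero]
        · rintro (rfl | rfl)
          · left; exact neg_add_cancel _
          · right
            have hra : -(r + a) + r = -a := by abel
            rw [hra]
            exact neg_eq_of_add_eq_zero_left (addself h2 a)
      have hfil : univ.filter (fun t => (QuotientAddGroup.mk t : H ⧸ K) = (r : H ⧸ K))
          = {r, r + a} := by
        ext t
        simp only [mem_filter, mem_univ, true_and, mem_insert, mem_singleton]
        exact hmem t
      rw [hfil, Finset.sum_insert (by
        simp only [mem_singleton]
        intro h
        exact ha (left_eq_add.mp h)), Finset.sum_singleton,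
        ← add_assoc, addself h2 r, zero_add]
  have hsum : ∑ t : H, t = Fintype.card (H ⧸ K) • a := by
    rw [← Finset.sum_fiberwise univ (fun t => (QuotientAddGroup.mk t : H ⧸ K)) (fun t => t)]
    rw [Finset.sum_congr rfl (fun q _ => hfiber q), Finset.sum_const, Finset.card_univ]
  refine ⟨Fintype.card (H ⧸ K), ?_, hsum⟩
  have horder : addOrderOf a = 2 := addOrderOf_eq_prime (h2 a) ha
  have hcard := AddSubgroup.card_eq_card_quotient_mul_card_addSubgroup K
  rw [Nat.card_zmultiples, horder] at hcard
  simp only [Nat.card_eq_fintype_card] at hcard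
  omega

private lemma sum_all_large (h2 : ∀ t : H, 2 • t = 0) (h4 : 4 ≤ Fintype.card H) :
    ∑ t : H, t = 0 := by
  classical
  have h1 : 3 ≤ ((univ : Finset H).erase 0).card := by
    rw [Finset.card_erase_of_mem (mem_univ 0), Finset.card_univ]; omega
  obtain ⟨b, hb⟩ : (((univ : Finset H).erase 0)).Nonempty := by
    apply Finset.card_pos.mp; omega
  obtain ⟨c, hc⟩ : ((((univ : Finset H).erase 0)).erase b).Nonempty := by
    apply Finset.card_pos.mp
    rw [Finset.card_erase_of_mem hb]; omega
  have hb0 : b ≠ 0 := Finset.ne_of_mem_erase hb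
  have hcb : c ≠ b := Finset.ne_of_mem_erase hc
  have hc0 : c ≠ 0 := Finset.ne_of_mem_erase (Finset.mem_of_mem_erase hc)
  obtain ⟨m, hm, hsb⟩ := pair_sum h2 hb0
  obtain ⟨m', hm', hsc⟩ := pair_sum h2 hc0
  have hmm : m = m' := by omega
  subst hmm
  rcases Nat.even_or_odd m with ⟨k, hk⟩ | ⟨k, hk⟩
  · rw [hsb, hk, add_nsmul]; exact addself h2 _
  · exfalso
    apply hcb
    have hmb : m • b = b := by
      rw [hk, add_nsmul, one_nsmul, mul_comm, mul_nsmul, two_nsmul, addself h2 _, zero_add]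
    have hmc : m • c = c := by
      rw [hk, add_nsmul, one_nsmul, mul_comm, mul_nsmul, two_nsmul, addself h2 _, zero_add]
    rw [← hmc, ← hsc, hsb, hmb]

end Aux

private lemma key (G : Type*) [AddCommGroup G] [Fintype G] :
    (∑ g : G, g = 0) ↔ twoRank G ≠ 1 := by
  classical
  set T : AddSubgroup G :=
    { carrier := {g | 2 • g = 0}
      zero_mem' := by simp
      add_mem' := by
        intro a b ha hb
        simp only [Set.mem_setOf_eq, smul_add] at *
        rw [ha, hb, add_zero]
      neg_mem' := by
        intro a ha
        simp only [Set.mem_setOf_eq, smul_neg] at *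
        rw [ha, neg_zero] } with hT
  have hmemT : ∀ g : G, g ∈ T ↔ 2 • g = 0 := fun g => Iff.rfl
  have h2T : ∀ t : T, 2 • t = 0 := by
    intro t
    apply Subtype.ext
    simpa using (hmemT t).mp t.2
  have hcardT : Nat.card {g : G // 2 • g = 0} = Nat.card T :=
    Nat.card_congr (Equiv.subtypeEquivRight fun x => (hmemT x).symm)
  have htr : twoRank G = Nat.log 2 (Fintype.card T) := by
    rw [twoRank, hcardT, Nat.card_eq_fintype_card]
  have hsum1 : ∑ g : G, g = ∑ t : T, (t : G) := by
    rw [← Finset.sum_filter_add_sum_filter_not univ (fun g : G => 2 • g = 0) (fun g => g)]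
    have hzero : ∑ g ∈ univ.filter (fun g : G => ¬ 2 • g = 0), g = 0 := by
      refine Finset.sum_involution (fun x _ => -x) (fun x _ => add_neg_cancel x)
        (fun x hx _ h => ?_) (fun x hx => ?_) (fun x _ => neg_neg x)
      · simp only [mem_filter, mem_univ, true_and] at hx
        have h' : -x = x := h
        exact hx (by rw [two_nsmul, show x + x = -x + x from by rw [h'], neg_add_cancel])
      · simp only [mem_filter, mem_univ, true_and] at hx ⊢
        intro h
        exact hx (by simpa using h)
    rw [hzero, add_zero]
    exact Finset.sum_subtype (univ.filter (fun g : G => 2 • g = 0))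
      (by intro x; simp [hmemT]) (fun g => g)
  have hsum2 : (∑ g : G, g = 0) ↔ (∑ t : T, t = 0) := by
    rw [hsum1]
    rw [show ∑ t : T, (t : G) = ((∑ t : T, t : T) : G) from (map_sum T.subtype _ _).symm]
    exact ZeroMemClass.coe_eq_zero
  rw [hsum2, htr]
  have hc1 : 1 ≤ Fintype.card T := Fintype.card_pos
  have hc3 : Fintype.card T ≠ 3 := by
    intro h3
    obtain ⟨a, ha⟩ := Fintype.exists_ne_of_one_lt_card (by omega) (0 : T)
    have : addOrderOf a = 2 := addOrderOf_eq_prime (h2T a) ha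
    have hd := addOrderOf_dvd_card (x := a)
    rw [this, h3] at hd
    omega
  rcases (show Fintype.card T = 1 ∨ Fintype.card T = 2 ∨ 4 ≤ Fintype.card T by omega)
    with h | h | h
  · haveI : Subsingleton T := Fintype.card_le_one_iff_subsingleton.mp (by omega)
    have : ∑ t : T, t = 0 := Finset.sum_eq_zero fun t _ => Subsingleton.elim t 0
    simp [this, h, Nat.log_one_right]
  · obtain ⟨x, y, hxy, huniv⟩ := Finset.card_eq_two.mp
      (show (univ : Finset T).card = 2 by rw [Finset.card_univ]; exact h)
    have hs : ∑ t : T, t = x + y := by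
      rw [huniv, Finset.sum_insert (by simpa using hxy), Finset.sum_singleton]
    have hne : x + y ≠ 0 := by
      intro h0
      exact hxy (by
        rw [eq_neg_of_add_eq_zero_right h0, neg_eq_of_add_eq_zero_left (addself h2T x)])
    have hlog : Nat.log 2 (Fintype.card T) = 1 := by
      rw [h]; exact Nat.log_eq_one_iff.mpr (by omega)
    simp [hs, hne, hlog]
  · have hs := sum_all_large h2T h
    have hlog : 2 ≤ Nat.log 2 (Fintype.card T) := by
      rw [Nat.le_log_iff_pow_le (by omega) (by omega)]
      omega
    simp only [hs, true_iff]
    omega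

theorem BO_card (G : Type*) [AddCommGroup G] [Fintype G] :
    BO (Fintype.card G) G =
      if twoRank G = 1 then Fintype.card G + 1 else Fintype.card G := by
  classical
  set n := Fintype.card G with hn
  have hn1 : 1 ≤ n := Fintype.card_pos
  have hzero : ∀ g : G, n • g = 0 := fun g => card_nsmul_eq_zero
  have hPn : (∀ A : Finset G, n ≤ A.card → ∃ B ⊆ A, IsBarycentric n B) ↔ (∑ g : G, g = 0) := by
    constructor
    · intro h
      obtain ⟨B, hBsub, hBcard, g, hg, hsum⟩ := h univ (by rw [Finset.card_univ])
      have hB : B = univ := Finset.eq_univ_of_card B (by rw [hBcard])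
      rw [hB] at hsum
      rw [hsum, hzero g]
    · intro h A hA
      have hA' : A = univ := Finset.eq_univ_of_card A
        (le_antisymm (by rw [← Finset.card_univ]; exact Finset.card_le_card (subset_univ A)) hA)
      refine ⟨univ, by rw [hA'], Finset.card_univ, 0, mem_univ 0, ?_⟩
      rw [h, hzero 0]
  have hnot : ∀ ℓ < n, ¬ (∀ A : Finset G, ℓ ≤ A.card → ∃ B ⊆ A, IsBarycentric n B) := by
    intro ℓ hℓ h
    obtain ⟨A, -, hAcard⟩ := Finset.exists_subset_card_eq
      (show ℓ ≤ (univ : Finset G).card by rw [Finset.card_univ]; omega)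
    obtain ⟨B, hBA, hBcard, -⟩ := h A (le_of_eq hAcard.symm)
    have := Finset.card_le_card hBA
    omega
  have htriv : (∀ A : Finset G, n + 1 ≤ A.card → ∃ B ⊆ A, IsBarycentric n B) := by
    intro A hA
    have : A.card ≤ n := by rw [hn]; exact Finset.card_le_univ A
    omega
  rw [BO]
  by_cases ht : twoRank G = 1
  · rw [if_pos ht]
    have hsum : ¬ (∑ g : G, g = 0) := by
      rw [key]; simp [ht]
    have hmemS : (n + 1) ∈ {ℓ : ℕ | ∀ A : Finset G, ℓ ≤ A.card → ∃ B ⊆ A, IsBarycentric n B} :=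
      htriv
    apply le_antisymm
    · exact Nat.sInf_le hmemS
    · apply le_csInf ⟨n + 1, hmemS⟩
      intro ℓ hℓ
      by_contra hlt
      push_neg at hlt
      rcases lt_or_eq_of_le (Nat.lt_succ_iff.mp hlt) with h | h
      · exact hnot ℓ h hℓ
      · exact hsum (hPn.mp (h ▸ hℓ))
  · rw [if_neg ht]
    have hsum : ∑ g : G, g = 0 := (key G).mpr ht
    have hmemS : n ∈ {ℓ : ℕ | ∀ A : Finset G, ℓ ≤ A.card → ∃ B ⊆ A, IsBarycentric n B} :=
      hPn.mpr hsum
    apply le_antisymm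
    · exact Nat.sInf_le hmemS
    · apply le_csInf ⟨n, hmemS⟩
      intro ℓ hℓ
      by_contra hlt
      push_neg at hlt
      exact hnot ℓ hlt hℓ
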